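/- Let ζ ∈ ℂ satisfy ζ⁴ = −1 (a primitive 8th root of unity), and let Q₀, Q₁, Q₂, Q₃ be the four bilinear forms in variables x₀,…,x₃ and y₀,…,y₃ given by: Q₀ = ζ³x₀y₂ + ζx₃y₀ + x₁y₀ − x₂y₂; Q₁ = ζ³x₃y₁ − ζ³x₀y₃ + ζ²x₂y₃ + x₁y₁; Q₂ = −(ζ² − ζ − 1)x₂y₀ − (ζ² + 2ζ − 1)x₀y₁ − (ζ² − 2)x₁y₁ + (ζ² − ζ − 1)x₂y₁ + (ζ² − 1)x₀y₂ − (ζ³ + ζ − 1)x₁y₂ − (ζ³ + ζ + 2)x₃y₂ − (ζ³ + ζ)x₀y₃ − (ζ³ + ζ − 1)x₁y₃ + (ζ² − ζ + 1)x₂y₃ + ζx₂y₂ + x₁y₀; Q₃ = 6ζ³x₃y₃ − (4ζ³ + 3ζ² − 2ζ + 1)x₁y₀ − 3(ζ³ + ζ)x₂y₀ + (2ζ³ + ζ² + 1)x₁y₁ − 3(ζ³ + ζ)x₂y₁ + 2(ζ² + ζ − 1)x₀y₂ + 3(ζ² + 1)x₁y₂ + (3ζ³ + 2ζ² − ζ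 − 2)x₂y₂ − 2(ζ³ + ζ + 1)x₀y₃ − 3(ζ² + 1)x₁y₃ + (ζ³ + ζ − 2)x₂y₃ + 6x₀y₀. Then for every nonzero vector x = (x₀,x₁,x₂,x₃) ∈ ℂ⁴ with x₀⁴ + x₁⁴ + x₂⁴ + x₃⁴ = 0 (i.e., every point of the Fermat quartic surface), the ℂ-subspace {y ∈ ℂ⁴ : Q₀(x,y) = Q₁(x,y) = Q₂(x,y) = Q₃(x,y) = 0} has dimension exactly 1; that is, there is exactly one point y ∈ ℙ³(ℂ) with Q_j(x,y) = 0 for all j = 0,1,2,3. -/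

import Mathlib

/-- The four bilinear forms `Q₀, Q₁, Q₂, Q₃` of bi-degree (1,1) cutting out the graph of the
isomorphism `X₄₈ ≅ X₅₆`, depending on a primitive 8th root of unity `ζ`. -/
noncomputable def OguisoQ (ζ : ℂ) : Fin 4 → (Fin 4 → ℂ) → (Fin 4 → ℂ) → ℂ :=
  ![fun x y => ζ ^ 3 * x 0 * y 2 + ζ * x 3 * y 0 + x 1 * y 0 - x 2 * y 2,
    fun x y => ζ ^ 3 * x 3 * y 1 - ζ ^ 3 * x 0 * y 3 + ζ ^ 2 * x 2 * y 3 + x 1 * y 1,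
    fun x y =>
      -(ζ ^ 2 - ζ - 1) * x 2 * y 0 - (ζ ^ 2 + 2 * ζ - 1) * x 0 * y 1
        - (ζ ^ 2 - 2) * x 1 * y 1 + (ζ ^ 2 - ζ - 1) * x 2 * y 1
        + (ζ ^ 2 - 1) * x 0 * y 2 - (ζ ^ 3 + ζ - 1) * x 1 * y 2
        - (ζ ^ 3 + ζ + 2) * x 3 * y 2 - (ζ ^ 3 + ζ) * x 0 * y 3
        - (ζ ^ 3 + ζ - 1) * x 1 * y 3 + (ζ ^ 2 - ζ + 1) * x 2 * y 3
        + ζ * x 2 * y 2 + x 1 * y 0,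
    fun x y =>
      6 * ζ ^ 3 * x 3 * y 3 - (4 * ζ ^ 3 + 3 * ζ ^ 2 - 2 * ζ + 1) * x 1 * y 0
        - 3 * (ζ ^ 3 + ζ) * x 2 * y 0 + (2 * ζ ^ 3 + ζ ^ 2 + 1) * x 1 * y 1
        - 3 * (ζ ^ 3 + ζ) * x 2 * y 1 + 2 * (ζ ^ 2 + ζ - 1) * x 0 * y 2
        + 3 * (ζ ^ 2 + 1) * x 1 * y 2 + (3 * ζ ^ 3 + 2 * ζ ^ 2 - ζ - 2) * x 2 * y 2
        - 2 * (ζ ^ 3 + ζ + 1) * x 0 * y 3 - 3 * (ζ ^ 2 + 1) * x 1 * y 3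
        + (ζ ^ 3 + ζ - 2) * x 2 * y 3 + 6 * x 0 * y 0]

set_option maxHeartbeats 1000000 in
private lemma oguiso_det_fin_four (M : Matrix (Fin 4) (Fin 4) ℂ) : M.det =
    M 0 0 * (M 1 1 * (M 2 2 * M 3 3 - M 2 3 * M 3 2) - M 1 2 * (M 2 1 * M 3 3 - M 2 3 * M 3 1)
        + M 1 3 * (M 2 1 * M 3 2 - M 2 2 * M 3 1))
    - M 0 1 * (M 1 0 * (M 2 2 * M 3 3 - M 2 3 * M 3 2) - M 1 2 * (M 2 0 * M 3 3 - M 2 3 * M 3 0)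
        + M 1 3 * (M 2 0 * M 3 2 - M 2 2 * M 3 0))
    + M 0 2 * (M 1 0 * (M 2 1 * M 3 3 - M 2 3 * M 3 1) - M 1 1 * (M 2 0 * M 3 3 - M 2 3 * M 3 0)
        + M 1 3 * (M 2 0 * M 3 1 - M 2 1 * M 3 0))
    - M 0 3 * (M 1 0 * (M 2 1 * M 3 2 - M 2 2 * M 3 1) - M 1 1 * (M 2 0 * M 3 2 - M 2 2 * M 3 0)
        + M 1 2 * (M 2 0 * M 3 1 - M 2 1 * M 3 0)) := by
  rw [Matrix.det_succ_row_zero, Fin.sum_univ_four]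
  simp [Matrix.det_fin_three, Matrix.submatrix_apply, Fin.succAbove, Fin.lt_def,
    show (Fin.succ 2 : Fin 4) = 3 from rfl, show (Fin.succ 1 : Fin 4) = 2 from rfl,
    show (Fin.succ 0 : Fin 4) = 1 from rfl, show ((3:Fin 4):ℕ) = 3 from rfl,
    show ((2:Fin 4):ℕ) = 2 from rfl, show ((1:Fin 4):ℕ) = 1 from rfl,
    show ((0:Fin 4):ℕ) = 0 from rfl, show (Fin.castSucc 2 : Fin 4) = 2 from rfl,
    show (Fin.castSucc 1 : Fin 4) = 1 from rfl, show (Fin.castSucc 0 : Fin 4) = 0 from rfl]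
  ring

open Matrix in
/-- If a 4×4 complex matrix has zero determinant but an invertible 3×3 minor, then its kernel
is one-dimensional. -/
lemma oguiso_ker_dim (A : Matrix (Fin 4) (Fin 4) ℂ) (hdet : A.det = 0)
    (i j : Fin 4) (hm : (A.submatrix i.succAbove j.succAbove).det ≠ 0) :
    Module.finrank ℂ ↥(LinearMap.ker A.mulVecLin) = 1 := by
  refine le_antisymm ?_ ?_
  · have hinj : Function.Injective
        ((LinearMap.proj j : (Fin 4 → ℂ) →ₗ[ℂ] ℂ).comp (LinearMap.ker A.mulVecLin).subtype) := by
      rw [← LinearMap.ker_eq_bot, LinearMap.ker_eq_bot']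
      rintro ⟨y, hy⟩ hyj
      rw [LinearMap.mem_ker, Matrix.mulVecLin_apply] at hy
      have hyj' : y j = 0 := hyj
      have hB : (A.submatrix i.succAbove j.succAbove).mulVec (fun t => y (j.succAbove t)) = 0 := by
        funext k
        have h1 : (A.mulVec y) (i.succAbove k) = 0 := by rw [hy]; rfl
        rw [Matrix.mulVec, dotProduct, Fin.sum_univ_succAbove _ j] at h1
        simpa [Matrix.mulVec, dotProduct, Matrix.submatrix_apply, hyj'] using h1
      have hBU : IsUnit (A.submatrix i.succAbove j.succAbove).det := isUnit_iff_ne_zero.mpr hm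
      have h2 := congrArg (A.submatrix i.succAbove j.succAbove)⁻¹.mulVec hB
      rw [Matrix.mulVec_mulVec, Matrix.nonsing_inv_mul _ hBU, Matrix.one_mulVec,
        Matrix.mulVec_zero] at h2
      ext l
      rcases eq_or_ne l j with rfl | hl
      · exact hyj'
      · obtain ⟨t, rfl⟩ := Fin.exists_succAbove_eq hl
        exact congrFun h2 t
    have := LinearMap.finrank_le_finrank_of_injective hinj
    simpa using this
  · obtain ⟨v, hvne, hv⟩ := (Matrix.exists_mulVec_eq_zero_iff.mpr hdet)
    have hmem : v ∈ LinearMap.ker A.mulVecLin := by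
      rw [LinearMap.mem_ker, Matrix.mulVecLin_apply, hv]
    have : (⟨v, hmem⟩ : ↥(LinearMap.ker A.mulVecLin)) ≠ 0 := by
      simpa [Subtype.ext_iff] using hvne
    exact Module.finrank_pos_iff.mpr ⟨⟨⟨v, hmem⟩, 0, this⟩⟩

set_option maxHeartbeats 4000000 in
set_option maxRecDepth 16000 in
/-- for every point `x` of the Fermat quartic, the common zero locus in `y` of
the four bilinear forms `Q₀, …, Q₃` is a 1-dimensional subspace of ℂ⁴, i.e., a single point of
ℙ³(ℂ). -/
theorem Oguiso_graph_projects_bijectively (ζ : ℂ) (hζ : ζ ^ 4 = -1)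
    (x : Fin 4 → ℂ) (hx : x ≠ 0)
    (hxF : x 0 ^ 4 + x 1 ^ 4 + x 2 ^ 4 + x 3 ^ 4 = 0) :
    ∃ W : Submodule ℂ (Fin 4 → ℂ), Module.finrank ℂ ↥W = 1 ∧
      ∀ y : Fin 4 → ℂ, (y ∈ W ↔ ∀ j : Fin 4, OguisoQ ζ j x y = 0) := by
  classical
  set A : Matrix (Fin 4) (Fin 4) ℂ := !![((1)*ζ)*x 3 + ((1))*x 1, 0, ((-1))*x 2 + ((1)*ζ^3)*x 0, 0;
    0, ((1)*ζ^3)*x 3 + ((1))*x 1, 0, ((1)*ζ^2)*x 2 + ((-1)*ζ^3)*x 0;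
    ((1) + (1)*ζ + (-1)*ζ^2)*x 2 + ((1))*x 1, ((-1) + (-1)*ζ + (1)*ζ^2)*x 2 + ((2) + (-1)*ζ^2)*x 1 + ((1) + (-2)*ζ + (-1)*ζ^2)*x 0, ((-2) + (-1)*ζ + (-1)*ζ^3)*x 3 + ((1)*ζ)*x 2 + ((1) + (-1)*ζ + (-1)*ζ^3)*x 1 + ((-1) + (1)*ζ^2)*x 0, ((1) + (-1)*ζ + (1)*ζ^2)*x 2 + ((1) + (-1)*ζ + (-1)*ζ^3)*x 1 + ((-1)*ζ + (-1)*ζ^3)*x 0;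
    ((-3)*ζ + (-3)*ζ^3)*x 2 + ((-1) + (2)*ζ + (-3)*ζ^2 + (-4)*ζ^3)*x 1 + ((6))*x 0, ((-3)*ζ + (-3)*ζ^3)*x 2 + ((1) + (1)*ζ^2 + (2)*ζ^3)*x 1, ((-2) + (-1)*ζ + (2)*ζ^2 + (3)*ζ^3)*x 2 + ((3) + (3)*ζ^2)*x 1 + ((-2) + (2)*ζ + (2)*ζ^2)*x 0, ((6)*ζ^3)*x 3 + ((-2) + (1)*ζ + (1)*ζ^3)*x 2 + ((-3) + (-3)*ζ^2)*x 1 + ((-2) + (-2)*ζ + (-2)*ζ^3)*x 0] with hA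
  have hdet : A.det = 0 := by
    rw [hA, oguiso_det_fin_four]
    simp only [Matrix.of_apply, Matrix.cons_val, Matrix.cons_val_zero, Matrix.cons_val_one, Matrix.head_cons]
    norm_num
    linear_combination ((-6) + (-6)*ζ^2 + (12)*ζ^3) * hxF + (((6) + (6)*ζ^2 + (-12)*ζ^3 + (-6)*ζ^4 + (-6)*ζ^6)*x 3^4 + ((4)*ζ^4 + (-1)*ζ^6)*x 2*x 3^3 + ((-4)*ζ^4 + (-6)*ζ^5)*x 2^2*x 3^2 + ((5)*ζ^4)*x 2^3*x 3 + ((6) + (6)*ζ^2 + (-6)*ζ^3)*x 2^4 + ((-6)*ζ^4 + (-3)*ζ^5 + (-6)*ζ^6)*x 1*x 3^3 + ((4)*ζ + (5)*ζ^3 + (-2)*ζ^4 + (3)*ζ^5 + (2)*ζ^6)*x 1*x 2*x 3^2 + ((2)*ζ + (-3)*ζ^2 + (-9)*ζ^3 + (-5)*ζ^4 + (-6)*ζ^5)*x 1*x 2^2*x 3 + ((-2) + (2)*ζ + (2)*ζ^2 + (4)*ζ^3)*x 1*x 2^3 + ((6)*ζ + (3)*ζ^2 + (3)*ζ^4)*x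 1^2*x 3^2 + ((4) + (-3)*ζ + (3)*ζ^2 + (-3)*ζ^3 + (2)*ζ^4)*x 1^2*x 2*x 3 + ((-2) + (-5)*ζ + (-7)*ζ^2 + (1)*ζ^3 + (-3)*ζ^4)*x 1^2*x 2^2 + ((6) + (-3)*ζ + (12)*ζ^2 + (6)*ζ^4)*x 1^3*x 3 + ((-5) + (-1)*ζ + (-3)*ζ^2 + (1)*ζ^3 + (2)*ζ^4)*x 1^3*x 2 + ((6)*ζ)*x 1^4 + ((4)*ζ^4 + (6)*ζ^5 + (2)*ζ^6)*x 0*x 3^3 + ((4)*ζ^4 + (-3)*ζ^5 + (6)*ζ^7)*x 0*x 2*x 3^2 + ((-8)*ζ^3 + (-12)*ζ^5 + (2)*ζ^6 + (-2)*ζ^7)*x 0*x 2^2*x 3 + ((-6)*ζ^2 + (-9)*ζ^3 + (6)*ζ^4 + (-6)*ζ^5 + (6)*ζ^6)*x 0*x 2^3 + ((4)*ζ + (6)*ζ^2 + (6)*ζ^3 + (7)*ζ^4)*x 0*x 1*x 3^2 + ((4)*ζ + (-9)*ζ^2 + (-7)*ζ^3 + (5)*ζ^4 + (5)*ζ^5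 + (7)*ζ^6 + (-4)*ζ^7 + (3)*ζ^8)*x 0*x 1*x 2*x 3 + ((-8) + (2)*ζ + (2)*ζ^2 + (4)*ζ^3 + (-12)*ζ^4 + (-1)*ζ^6)*x 0*x 1*x 2^2 + ((4) + (9)*ζ + (1)*ζ^2 + (3)*ζ^3 + (-1)*ζ^4 + (-1)*ζ^5 + (3)*ζ^7 + (4)*ζ^8)*x 0*x 1^2*x 3 + ((-4) + (-6)*ζ + (-1)*ζ^2 + (12)*ζ^3 + (7)*ζ^4 + (3)*ζ^5 + (-4)*ζ^6)*x 0*x 1^2*x 2 + ((3) + (-1)*ζ + (2)*ζ^2 + (3)*ζ^3 + (2)*ζ^4 + (2)*ζ^5)*x 0*x 1^3 + ((2)*ζ^4)*x 0^2*x 3^2 + ((-2)*ζ^3 + (12)*ζ^4 + (8)*ζ^6 + (-2)*ζ^7 + (3)*ζ^8)*x 0^2*x 2*x 3 + ((6)*ζ^2 + (-6)*ζ^3 + (3)*ζ^4 + (-6)*ζ^5 + (3)*ζ^6 + (-6)*ζ^7)*x 0^2*x 2^2 + ((2)*ζ + (2)*ζ^3 + (2)*ζ^5 + (2)*ζ^6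 + (3)*ζ^7 + (4)*ζ^8)*x 0^2*x 1*x 3 + ((6)*ζ + (-2)*ζ^2 + (9)*ζ^3 + (-6)*ζ^4 + (-2)*ζ^5 + (-4)*ζ^6 + (1)*ζ^7)*x 0^2*x 1*x 2 + ((2) + (8)*ζ^3 + (-1)*ζ^4 + (-8)*ζ^5 + (3)*ζ^6 + (4)*ζ^7)*x 0^2*x 1^2 + ((2)*ζ^4 + (-6)*ζ^5)*x 0^3*x 3 + ((-6)*ζ^3 + (12)*ζ^4 + (6)*ζ^6 + (3)*ζ^7)*x 0^3*x 2 + ((2)*ζ^3 + (-12)*ζ^4 + (11)*ζ^6 + (4)*ζ^7)*x 0^3*x 1 + ((6) + (6)*ζ^2 + (-12)*ζ^3 + (-6)*ζ^4)*x 0^4) * hζ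
  have hex : ∃ i j : Fin 4, (A.submatrix (Fin.succAbove i) (Fin.succAbove j)).det ≠ 0 := by
    by_contra hcon
    push_neg at hcon
    have h00 := hcon 0 0
    have h01 := hcon 0 1
    have h02 := hcon 0 2
    have h03 := hcon 0 3
    have h10 := hcon 1 0
    have h11 := hcon 1 1
    have h12 := hcon 1 2
    have h13 := hcon 1 3
    have h20 := hcon 2 0
    have h21 := hcon 2 1
    have h22 := hcon 2 2
    have h23 := hcon 2 3
    have h30 := hcon 3 0
    have h31 := hcon 3 1
    have h32 := hcon 3 2
    have h33 := hcon 3 3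
    simp only [hA, Matrix.det_fin_three, Matrix.submatrix_apply, Matrix.of_apply, Matrix.cons_val,
      show Fin.succAbove (0:Fin 4) (0:Fin 3) = 1 from rfl,
      show Fin.succAbove (0:Fin 4) (1:Fin 3) = 2 from rfl,
      show Fin.succAbove (0:Fin 4) (2:Fin 3) = 3 from rfl,
      show Fin.succAbove (1:Fin 4) (0:Fin 3) = 0 from rfl,
      show Fin.succAbove (1:Fin 4) (1:Fin 3) = 2 from rfl,
      show Fin.succAbove (1:Fin 4) (2:Fin 3) = 3 from rfl,
      show Fin.succAbove (2:Fin 4) (0:Fin 3) = 0 from rfl,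
      show Fin.succAbove (2:Fin 4) (1:Fin 3) = 1 from rfl,
      show Fin.succAbove (2:Fin 4) (2:Fin 3) = 3 from rfl,
      show Fin.succAbove (3:Fin 4) (0:Fin 3) = 0 from rfl,
      show Fin.succAbove (3:Fin 4) (1:Fin 3) = 1 from rfl,
      show Fin.succAbove (3:Fin 4) (2:Fin 3) = 2 from rfl,
      Matrix.cons_val_zero, Matrix.cons_val_one, Matrix.head_cons] at h00 h01 h02 h03 h10 h11 h12 h13 h20 h21 h22 h23 h30 h31 h32 h33
    norm_num [hA, Matrix.det_fin_three, Matrix.submatrix_apply,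
      show Fin.succAbove (0:Fin 4) (0:Fin 3) = 1 from rfl,
      show Fin.succAbove (0:Fin 4) (1:Fin 3) = 2 from rfl,
      show Fin.succAbove (0:Fin 4) (2:Fin 3) = 3 from rfl,
      show Fin.succAbove (1:Fin 4) (0:Fin 3) = 0 from rfl,
      show Fin.succAbove (1:Fin 4) (1:Fin 3) = 2 from rfl,
      show Fin.succAbove (1:Fin 4) (2:Fin 3) = 3 from rfl,
      show Fin.succAbove (2:Fin 4) (0:Fin 3) = 0 from rfl,
      show Fin.succAbove (2:Fin 4) (1:Fin 3) = 1 from rfl,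
      show Fin.succAbove (2:Fin 4) (2:Fin 3) = 3 from rfl,
      show Fin.succAbove (3:Fin 4) (0:Fin 3) = 0 from rfl,
      show Fin.succAbove (3:Fin 4) (1:Fin 3) = 1 from rfl,
      show Fin.succAbove (3:Fin 4) (2:Fin 3) = 2 from rfl,
      Matrix.cons_val'] at h00 h01 h02 h03 h10 h11 h12 h13 h20 h21 h22 h23 h30 h31 h32 h33
    apply hx
    have h3 : (3 : ℕ) ≠ 0 := by norm_num
    funext k
    fin_cases k
    · show x 0 = 0
      have h : x 0 ^ 3 = 0 := by linear_combination ((1/72) + (-1/144)*ζ + (-1/144)*ζ^3) * h02 + ((-1/72) + (1/144)*ζ + (1/144)*ζ^3) * h13 + ((-1/24)*ζ^2) * h21 + ((1/72)*ζ + (-1/72)*ζ^2 + (-1/72)*ζ^3) * h22 + ((1/72) + (-1/72)*ζ + (-1/72)*ζ^2) * h23 + ((1/24) + (1/12)*ζ + (-1/24)*ζ^2) * h30 + ((-1/72)*ζ + (1/18)*ζ^2 + (1/72)*ζ^3) * h32 + ((-1/72) + (1/18)*ζ + (1/72)*ζ^2) * h33 + (((-1/36)*ζ^4 + (7/72)*ζ^5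 + (1/12)*ζ^6)*x 3^3 + ((-1/12)*ζ^2 + (-5/144)*ζ^4 + (1/24)*ζ^5 + (-1/144)*ζ^6 + (1/24)*ζ^7)*x 2*x 3^2 + ((1/36)*ζ + (1/36)*ζ^2 + (-11/144)*ζ^3 + (-1/12)*ζ^4 + (-5/144)*ζ^5 + (1/72)*ζ^6 + (-1/72)*ζ^7)*x 2^2*x 3 + ((1/12)*ζ + (-1/12)*ζ^3 + (1/12)*ζ^4 + (-1/24)*ζ^5 + (1/24)*ζ^6)*x 2^3 + ((7/72)*ζ^2 + (11/144)*ζ^3 + (1/8)*ζ^4 + (1/16)*ζ^5)*x 1*x 3^2 + ((-11/72)*ζ + (7/144)*ζ^2 + (-7/36)*ζ^3 + (1/24)*ζ^4 + (-1/24)*ζ^5 + (5/72)*ζ^6 + (-1/36)*ζ^7 + (1/48)*ζ^8)*x 1*x 2*x 3 + ((-1/36) + (-1/24)*ζ + (1/24)*ζ^2 + (1/9)*ζ^3 + (-7/144)*ζ^4 + (-1/144)*ζ^6)*x 1*x 2^2 + ((5/36)*ζ + (1/9)*ζ^2 + (5/144)*ζ^3 + (-1/18)*ζ^4 + (-1/24)*ζ^5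 + (1/36)*ζ^6 + (1/48)*ζ^7 + (1/36)*ζ^8)*x 1^2*x 3 + ((-13/72) + (-1/72)*ζ + (-5/48)*ζ^2 + (17/144)*ζ^3 + (-1/144)*ζ^4 + (1/48)*ζ^5 + (-1/36)*ζ^6)*x 1^2*x 2 + ((1/72) + (-1/48)*ζ + (5/144)*ζ^3 + (1/72)*ζ^4 + (1/72)*ζ^5)*x 1^3 + ((1/72)*ζ^4 + (1/36)*ζ^5 + (-1/72)*ζ^6)*x 0*x 3^2 + ((-7/36)*ζ^3 + (7/36)*ζ^4 + (7/72)*ζ^5 + (1/48)*ζ^6 + (1/36)*ζ^7 + (1/48)*ζ^8)*x 0*x 2*x 3 + ((-1/12) + (-1/12)*ζ + (3/16)*ζ^2 + (-1/12)*ζ^3 + (-1/12)*ζ^4 + (-1/12)*ζ^5 + (-1/16)*ζ^6 + (-1/12)*ζ^7)*x 0*x 2^2 + ((1/72)*ζ + (-1/72)*ζ^3 + (-1/48)*ζ^5 + (1/12)*ζ^6 + (17/144)*ζ^7 + (1/36)*ζ^8)*x 0*x 1*x 3 + ((-1/24) + (3/16)*ζ + (-1/72)*ζ^2 + (5/144)*ζ^3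 + (1/72)*ζ^4 + (-1/6)*ζ^5 + (-7/36)*ζ^6 + (1/72)*ζ^7)*x 0*x 1*x 2 + ((-7/72) + (7/72)*ζ + (13/144)*ζ^2 + (1/72)*ζ^3 + (5/144)*ζ^4 + (-1/18)*ζ^5 + (1/24)*ζ^6 + (1/18)*ζ^7)*x 0*x 1^2 + ((-1/36)*ζ + (7/72)*ζ^2 + (-1/24)*ζ^3 + (1/72)*ζ^4 + (-1/36)*ζ^5 + (-1/12)*ζ^6 + (1/24)*ζ^7)*x 0^2*x 3 + ((1/12) + (-5/24)*ζ + (1/12)*ζ^2 + (-1/12)*ζ^3 + (1/6)*ζ^4 + (1/4)*ζ^5 + (1/24)*ζ^6 + (1/6)*ζ^7)*x 0^2*x 2 + ((-1/36) + (13/72)*ζ + (-1/12)*ζ^2 + (-5/24)*ζ^3 + (-11/72)*ζ^4 + (-1/9)*ζ^5 + (23/72)*ζ^6 + (2/9)*ζ^7)*x 0^2*x 1 + ((1) + (-1/6)*ζ^3 + (-7/12)*ζ^4 + (1/24)*ζ^6)*x 0^3) * hζ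
      exact pow_eq_zero_iff h3 |>.mp h
    · show x 1 = 0
      have h : x 1 ^ 3 = 0 := by linear_combination ((-1/144) + (-1/72)*ζ + (1/144)*ζ^2) * h00 + ((-1/144) + (-1/72)*ζ + (1/144)*ζ^2) * h11 + ((-1/144) + (-1/72)*ζ + (1/144)*ζ^2) * h20 + ((1/144) + (1/36)*ζ + (-1/48)*ζ^2 + (-1/72)*ζ^3) * h21 + ((-1/48) + (1/48)*ζ^2) * h22 + ((1/48) + (-1/48)*ζ^2) * h23 + ((1/36) + (-1/36)*ζ + (1/72)*ζ^2 + (-1/12)*ζ^3) * h30 + ((1/72) + (-1/36)*ζ + (-1/36)*ζ^3) * h31 + ((1/24) + (1/24)*ζ + (1/24)*ζ^3) * h32 + ((1/24) + (1/24)*ζ + (1/24)*ζ^3) * h33 + (((-1/12)*ζ^5 + (-1/24)*ζ^6 + (1/24)*ζ^7)*x 3^3 + ((1/36)*ζ + (1/18)*ζ^2 + (-5/144)*ζ^3 + (1/24)*ζ^4 + (-1/72)*ζ^6 + (1/144)*ζ^7)*x 2*x 3^2 + ((1/72)*ζ + (1/144)*ζ^2 + (-13/72)*ζ^3 + (-1/144)*ζ^4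 + (-5/36)*ζ^5 + (1/24)*ζ^6)*x 2^2*x 3 + ((-1/72) + (-1/72)*ζ + (1/24)*ζ^2 + (1/16)*ζ^3 + (5/72)*ζ^4 + (-1/48)*ζ^5)*x 2^3 + ((1/8)*ζ + (11/48)*ζ^2 + (1/24)*ζ^3 + (1/8)*ζ^5 + (-1/48)*ζ^6 + (1/24)*ζ^7)*x 1*x 3^2 + ((1/18) + (7/144)*ζ + (-1/9)*ζ^2 + (-1/144)*ζ^3 + (-5/72)*ζ^4 + (1/72)*ζ^5 + (-1/72)*ζ^7)*x 1*x 2*x 3 + ((-1/12) + (-1/24)*ζ + (-13/72)*ζ^2 + (-11/144)*ζ^3 + (1/48)*ζ^4 + (-1/48)*ζ^5 + (1/48)*ζ^6)*x 1*x 2^2 + ((1/6) + (1/12)*ζ + (1/12)*ζ^2 + (11/24)*ζ^3 + (1/6)*ζ^5 + (-1/24)*ζ^6)*x 1^2*x 3 + ((-1/6) + (-25/144)*ζ + (-1/144)*ζ^2 + (-1/18)*ζ^3 + (1/16)*ζ^4 + (1/48)*ζ^5 + (-1/72)*ζ^6)*x 1^2*x 2 + ((17/24) + (-1/12)*ζ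 + (1/4)*ζ^2 + (-1/12)*ζ^3)*x 1^3 + ((1/36)*ζ + (7/72)*ζ^2 + (7/72)*ζ^3 + (11/72)*ζ^4 + (1/72)*ζ^5 + (-1/12)*ζ^6 + (1/36)*ζ^7)*x 0*x 3^2 + ((1/36)*ζ + (-1/144)*ζ^2 + (-13/48)*ζ^3 + (1/24)*ζ^4 + (1/16)*ζ^5 + (3/16)*ζ^6 + (-7/72)*ζ^7)*x 0*x 2*x 3 + ((-1/18) + (-7/72)*ζ + (13/144)*ζ^2 + (-1/24)*ζ^3 + (-1/24)*ζ^4 + (-13/72)*ζ^5 + (7/144)*ζ^6 + (-1/24)*ζ^7)*x 0*x 2^2 + ((1/18) + (37/144)*ζ + (25/144)*ζ^2 + (-1/72)*ζ^3 + (-1/144)*ζ^4 + (-11/144)*ζ^5 + (7/72)*ζ^6 + (5/72)*ζ^7 + (1/12)*ζ^8)*x 0*x 1*x 3 + ((-5/36) + (-17/144)*ζ + (-5/36)*ζ^2 + (13/72)*ζ^3 + (17/48)*ζ^4 + (1/16)*ζ^5 + (-19/144)*ζ^6 + (-7/72)*ζ^7)*x 0*x 1*x 2 + ((1/12) + (5/72)*ζ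 + (-1/12)*ζ^2 + (3/16)*ζ^3 + (5/36)*ζ^4 + (11/144)*ζ^5 + (1/72)*ζ^6 + (-1/72)*ζ^7)*x 0*x 1^2 + ((1/72)*ζ + (1/36)*ζ^2 + (1/72)*ζ^4 + (1/24)*ζ^5 + (5/36)*ζ^6 + (-1/36)*ζ^7 + (1/12)*ζ^8)*x 0^2*x 3 + ((1/24)*ζ + (5/72)*ζ^2 + (7/36)*ζ^4 + (-25/144)*ζ^5 + (1/24)*ζ^6 + (-5/144)*ζ^7 + (1/24)*ζ^8)*x 0^2*x 2 + ((1/36) + (1/18)*ζ + (-1/36)*ζ^2 + (13/72)*ζ^3 + (25/144)*ζ^4 + (-5/24)*ζ^5 + (-13/144)*ζ^6 + (7/36)*ζ^7 + (1/18)*ζ^8)*x 0^2*x 1 + ((1/72)*ζ^3 + (-1/18)*ζ^4 + (-13/72)*ζ^5 + (11/72)*ζ^6 + (1/12)*ζ^7)*x 0^3) * hζ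
      exact pow_eq_zero_iff h3 |>.mp h
    · show x 2 = 0
      have h : x 2 ^ 3 = 0 := by linear_combination ((1/144) + (1/72)*ζ + (-1/144)*ζ^2) * h02 + ((-1/144) + (-1/144)*ζ^2 + (-1/72)*ζ^3) * h13 + ((-1/48)*ζ + (1/48)*ζ^3) * h20 + ((-1/48)*ζ + (1/48)*ζ^3) * h21 + ((-1/144)*ζ + (-1/72)*ζ^2 + (1/144)*ζ^3) * h22 + ((1/72) + (1/144)*ζ + (-1/72)*ζ^2 + (1/48)*ζ^3) * h23 + ((1/24) + (-1/24)*ζ + (-1/24)*ζ^2) * h30 + ((-1/24) + (1/24)*ζ + (1/24)*ζ^2) * h31 + ((-1/24) + (-1/72)*ζ + (1/72)*ζ^2 + (1/18)*ζ^3) * h32 + ((1/36) + (1/72)*ζ + (-1/36)*ζ^2) * h33 + (((1/18)*ζ^4 + (1/18)*ζ^5 + (-1/24)*ζ^6)*x 3^3 + ((-1/24)*ζ^2 + (1/16)*ζ^3 + (-1/18)*ζ^4 + (-5/16)*ζ^5 + (-5/72)*ζ^6)*x 2*x 3^2 + ((1/72)*ζ + (1/48)*ζ^2 + (-1/36)*ζ^3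 + (13/144)*ζ^4 + (1/6)*ζ^5 + (-1/72)*ζ^6)*x 2^2*x 3 + ((1) + (1/24)*ζ + (-1/24)*ζ^2 + (1/12)*ζ^3 + (-1/3)*ζ^4 + (1/24)*ζ^5)*x 2^3 + ((5/72)*ζ + (1/16)*ζ^2 + (1/24)*ζ^3 + (5/48)*ζ^4 + (-5/72)*ζ^5 + (1/12)*ζ^6)*x 1*x 3^2 + ((-1/48)*ζ + (-23/72)*ζ^3 + (-17/72)*ζ^4 + (-1/72)*ζ^5 + (-1/9)*ζ^6 + (1/48)*ζ^7)*x 1*x 2*x 3 + ((-5/72) + (1/72)*ζ + (13/72)*ζ^2 + (5/48)*ζ^3 + (5/72)*ζ^4 + (-1/144)*ζ^5)*x 1*x 2^2 + ((5/72) + (5/72)*ζ + (-1/16)*ζ^2 + (7/72)*ζ^3 + (-1/12)*ζ^4 + (1/18)*ζ^5 + (-1/144)*ζ^6 + (1/36)*ζ^7)*x 1^2*x 3 + ((-1/12) + (-17/144)*ζ + (-35/144)*ζ^2 + (-1/48)*ζ^3 + (1/16)*ζ^4 + (-5/72)*ζ^5)*x 1^2*x 2 + ((-1/144) + (-7/72)*ζ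 + (1/144)*ζ^2 + (-1/24)*ζ^3 + (1/18)*ζ^4 + (1/36)*ζ^5)*x 1^3 + ((-1/36)*ζ^4 + (-1/72)*ζ^5 + (-1/18)*ζ^6 + (1/8)*ζ^8)*x 0*x 3^2 + ((-5/36)*ζ^3 + (-1/9)*ζ^4 + (-17/144)*ζ^5 + (-7/36)*ζ^6 + (1/16)*ζ^7 + (-1/24)*ζ^8)*x 0*x 2*x 3 + ((-1/24) + (-1/16)*ζ + (1/24)*ζ^2 + (-11/24)*ζ^3 + (-1/24)*ζ^4 + (13/48)*ζ^5 + (-1/12)*ζ^6 + (5/24)*ζ^7)*x 0*x 2^2 + ((1/18)*ζ + (-5/72)*ζ^2 + (-2/9)*ζ^3 + (-5/144)*ζ^4 + (1/24)*ζ^5 + (7/144)*ζ^6 + (-1/12)*ζ^8)*x 0*x 1*x 3 + ((-1/16) + (-1/9)*ζ + (13/144)*ζ^2 + (7/36)*ζ^3 + (-7/72)*ζ^4 + (-7/24)*ζ^5 + (1/24)*ζ^6 + (1/36)*ζ^7)*x 0*x 1*x 2 + ((-23/144)*ζ + (-1/36)*ζ^2 + (25/144)*ζ^3 + (1/72)*ζ^4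 + (1/72)*ζ^5 + (-1/24)*ζ^6 + (-1/18)*ζ^7)*x 0*x 1^2 + ((-1/72)*ζ + (1/24)*ζ^2 + (-1/72)*ζ^3 + (1/72)*ζ^4 + (7/72)*ζ^5 + (1/24)*ζ^6 + (1/24)*ζ^7 + (-1/24)*ζ^8)*x 0^2*x 3 + ((1/24) + (-1/12)*ζ + (1/24)*ζ^2 + (1/24)*ζ^3 + (-1/24)*ζ^4 + (-1/12)*ζ^5 + (-1/6)*ζ^6 + (-1/24)*ζ^7 + (-1/8)*ζ^8)*x 0^2*x 2 + ((-1/72) + (1/12)*ζ + (5/72)*ζ^2 + (-7/72)*ζ^3 + (-5/72)*ζ^4 + (-1/72)*ζ^5 + (-1/36)*ζ^6 + (-7/72)*ζ^7 + (-1/24)*ζ^8)*x 0^2*x 1 + ((-1/12)*ζ^3 + (1/12)*ζ^4 + (1/4)*ζ^5 + (1/24)*ζ^6)*x 0^3) * hζ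
      exact pow_eq_zero_iff h3 |>.mp h
    · show x 3 = 0
      have h : x 3 ^ 3 = 0 := by linear_combination ((-1/144)*ζ + (-1/72)*ζ^2 + (1/144)*ζ^3) * h00 + ((1/72) + (-1/144)*ζ + (-1/144)*ζ^3) * h11 + ((1/24)*ζ) * h22 + ((1/12) + (-1/24)*ζ + (-1/24)*ζ^3) * h33 + (((1) + (-2/3)*ζ^4 + (-1/12)*ζ^6 + (-1/12)*ζ^7 + (1/24)*ζ^8)*x 3^3 + ((-1/18)*ζ + (1/36)*ζ^2 + (1/72)*ζ^3 + (7/144)*ζ^4 + (1/18)*ζ^5 + (-1/24)*ζ^6 + (-1/72)*ζ^7 + (1/144)*ζ^8)*x 2*x 3^2 + ((-1/36)*ζ + (1/18)*ζ^2 + (-3/16)*ζ^3 + (-7/72)*ζ^4 + (1/144)*ζ^5 + (-7/72)*ζ^6 + (1/24)*ζ^7)*x 2^2*x 3 + ((1/36) + (-1/24)*ζ + (1/72)*ζ^2 + (-1/12)*ζ^3 + (5/48)*ζ^4 + (1/36)*ζ^5 + (-1/48)*ζ^6)*x 2^3 + ((1/12)*ζ + (11/48)*ζ^3 + (-5/24)*ζ^4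 + (-1/6)*ζ^5 + (-1/24)*ζ^6 + (-5/48)*ζ^7 + (1/24)*ζ^8)*x 1*x 3^2 + ((-1/18) + (7/72)*ζ + (1/48)*ζ^2 + (-1/72)*ζ^3 + (5/144)*ζ^4 + (7/72)*ζ^6 + (-1/72)*ζ^8)*x 1*x 2*x 3 + ((-1/18) + (1/36)*ζ + (1/18)*ζ^2 + (-7/72)*ζ^3 + (-19/144)*ζ^4 + (-5/144)*ζ^5 + (-1/48)*ζ^6 + (1/48)*ζ^7)*x 1*x 2^2 + ((1/12) + (1/24)*ζ + (1/8)*ζ^2 + (-1/24)*ζ^3 + (1/8)*ζ^4 + (-1/24)*ζ^5 + (1/12)*ζ^6 + (-1/24)*ζ^7)*x 1^2*x 3 + ((-1/72) + (11/144)*ζ^2 + (1/144)*ζ^3 + (1/144)*ζ^5 + (1/48)*ζ^6 + (-1/72)*ζ^7)*x 1^2*x 2 + ((1/12)*ζ + (1/24)*ζ^2 + (1/12)*ζ^3)*x 1^3 + ((-1/18)*ζ + (-1/18)*ζ^2 + (1/72)*ζ^3 + (11/72)*ζ^4 + (13/72)*ζ^5 + (1/12)*ζ^6 + (-1/72)*ζ^7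 + (-1/72)*ζ^8)*x 0*x 3^2 + ((-1/18)*ζ + (11/72)*ζ^2 + (-1/48)*ζ^3 + (5/144)*ζ^4 + (1/18)*ζ^5 + (-1/144)*ζ^6 + (7/48)*ζ^7 + (-1/24)*ζ^8)*x 0*x 2*x 3 + ((1/9) + (-1/12)*ζ + (5/36)*ζ^2 + (-7/48)*ζ^3 + (1/24)*ζ^4 + (-1/8)*ζ^5 + (-1/72)*ζ^6 + (1/144)*ζ^7)*x 0*x 2^2 + ((-1/18) + (1/72)*ζ + (3/16)*ζ^2 + (23/144)*ζ^3 + (1/36)*ζ^4 + (-1/144)*ζ^5 + (1/16)*ζ^6 + (-1/36)*ζ^7)*x 0*x 1*x 3 + ((1/18) + (1/12)*ζ + (-5/144)*ζ^2 + (-13/72)*ζ^3 + (1/18)*ζ^4 + (11/144)*ζ^5 + (11/144)*ζ^6 + (-1/144)*ζ^7)*x 0*x 1*x 2 + ((1/24) + (7/72)*ζ + (-1/72)*ζ^3 + (-5/144)*ζ^4 + (-1/36)*ζ^5 + (1/144)*ζ^6 + (1/24)*ζ^8)*x 0*x 1^2 + ((-1/36)*ζ + (1/72)*ζ^2 + (1/36)*ζ^4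 + (1/36)*ζ^5 + (-1/72)*ζ^6)*x 0^2*x 3 + ((-1/12)*ζ + (1/24)*ζ^2 + (-5/24)*ζ^3 + (13/72)*ζ^4 + (1/24)*ζ^5 + (5/144)*ζ^6 + (-1/72)*ζ^7 + (1/48)*ζ^8)*x 0^2*x 2 + ((-1/36) + (1/36)*ζ + (1/36)*ζ^2 + (-1/9)*ζ^3 + (7/72)*ζ^4 + (1/48)*ζ^5 + (1/36)*ζ^6 + (1/144)*ζ^7 + (1/36)*ζ^8)*x 0^2*x 1 + ((7/72)*ζ^4 + (-1/18)*ζ^5 + (-1/72)*ζ^6)*x 0^3) * hζ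
      exact pow_eq_zero_iff h3 |>.mp h
  obtain ⟨i, j, hm⟩ := hex
  refine ⟨LinearMap.ker A.mulVecLin, oguiso_ker_dim A hdet i j hm, fun y => ?_⟩
  have key : ∀ j' : Fin 4, (A.mulVec y) j' = OguisoQ ζ j' x y := by
    intro j'
    fin_cases j' <;>
      · simp only [OguisoQ, hA, Matrix.mulVec, dotProduct, Fin.sum_univ_four, Matrix.of_apply, Matrix.cons_val,
          Matrix.cons_val_zero, Matrix.cons_val_one, Matrix.head_cons, Fin.isValue, Fin.zero_eta, Fin.mk_one,
          show (⟨2, by norm_num⟩ : Fin 4) = 2 from rfl, show (⟨3, by norm_num⟩ : Fin 4) = 3 from rfl]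
        norm_num [OguisoQ, hA, Matrix.mulVec, dotProduct, Fin.sum_univ_four]
        ring
  rw [LinearMap.mem_ker, Matrix.mulVecLin_apply, funext_iff]
  exact forall_congr' fun j' => by rw [key j', Pi.zero_apply]
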